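/- Let ρ ∈ P(Ω), κ ∈ (0,∞), and let ν_κ ∈ M₊(Ω) be a minimizer of J_{ρ,κ}. Define C_{ρ,κ} := sup_{y ∈ Ω} ρ(B(y, κπ/2)), where B(y,r) is the open ball of radius r around y. Then ‖ν_κ‖ ≤ 4 C_{ρ,κ}. -/

import Mathlib

open scoped Classical
open MeasureTheory ENNReal Filter Topology Real
open scoped NNReal

noncomputable section

/-- The entropy function `φ` with `φ(s) = s log s - s + 1` for `s > 0`, `φ(0) = 1`. -/
def phiEnt (s : ℝ≥0∞) : ℝ≥0∞ :=
  if s = 0 then 1 else if s = ⊤ then ⊤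
  else ENNReal.ofReal (s.toReal * Real.log s.toReal - s.toReal + 1)

/-- Kullback–Leibler divergence of `σ` with respect to `μ`. -/
def KLdiv {X : Type*} [MeasurableSpace X] (σ μ : Measure X) : ℝ≥0∞ :=
  if σ ≪ μ then ∫⁻ x, phiEnt (σ.rnDeriv μ x) ∂μ else ⊤

/-- The cost `ĉ_κ(x,y) = -2 log cos(d(x,y)/κ)` for `d(x,y) ≤ κπ/2`, `∞` otherwise. -/
def hkCost {X : Type*} [PseudoMetricSpace X] (κ : ℝ) (x y : X) : ℝ≥0∞ :=
  if dist x y < κ * π / 2 then ENNReal.ofReal (-2 * Real.log (Real.cos (dist x y / κ))) else ⊤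

/-- Squared Hellinger–Kantorovich distance with length scale `κ`. -/
def HK2 {X : Type*} [MeasurableSpace X] [PseudoMetricSpace X] (κ : ℝ) (μ ν : Measure X) : ℝ≥0∞ :=
  ⨅ (γ : Measure (X × X)) (_ : IsFiniteMeasure γ),
    (∫⁻ p, hkCost κ p.1 p.2 ∂γ) + KLdiv (γ.map Prod.fst) μ + KLdiv (γ.map Prod.snd) ν

abbrev Ed (d : ℕ) : Type := EuclideanSpace ℝ (Fin d)

/-- Truncated cosine `Cos(s) = cos(min(|s|, π/2))`. -/
def tcos (s : ℝ) : ℝ := Real.cos (min |s| (π / 2))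

/-- Squared Hellinger distance. -/
def Hell2 {X : Type*} [MeasurableSpace X] (μ ν : Measure X) : ℝ≥0∞ :=
  ∫⁻ x, ENNReal.ofReal ((Real.sqrt ((μ.rnDeriv (μ + ν)) x).toReal
      - Real.sqrt ((ν.rnDeriv (μ + ν)) x).toReal) ^ 2) ∂(μ + ν)

/-- Squared Wasserstein-2 distance (value `∞` when no coupling exists). -/
def W2 {X : Type*} [MeasurableSpace X] [PseudoMetricSpace X] (μ ν : Measure X) : ℝ≥0∞ :=
  ⨅ (γ : Measure (X × X)) (_ : γ.map Prod.fst = μ) (_ : γ.map Prod.snd = ν),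
    ∫⁻ p, ENNReal.ofReal (dist p.1 p.2 ^ 2) ∂γ

/-- Borel σ-algebra on the space of finite measures with the weak* topology. -/
instance (X : Type*) [TopologicalSpace X] [MeasurableSpace X] [OpensMeasurableSpace X] :
    MeasurableSpace (FiniteMeasure X) := borel _

instance (X : Type*) [TopologicalSpace X] [MeasurableSpace X] [OpensMeasurableSpace X] :
    BorelSpace (FiniteMeasure X) := ⟨rfl⟩

/-- The set `𝔠` of nonnegative measures of total mass at most `M`. -/
def cSet (X : Type*) [TopologicalSpace X] [MeasurableSpace X] [OpensMeasurableSpace X]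
    (M : ℝ≥0) : Set (FiniteMeasure X) := {μ | μ.mass ≤ M}

/-- The barycenter functional `J_{Λ,κ}`. -/
def JCont {X : Type*} [MeasurableSpace X] [PseudoMetricSpace X] [OpensMeasurableSpace X]
    {M : ℝ≥0} (Λ : Measure (cSet X M)) (κ : ℝ) (ν : Measure X) : ℝ≥0∞ :=
  ∫⁻ μ : cSet X M, HK2 κ ((μ : FiniteMeasure X) : Measure X) ν ∂Λ

/-- Barycenter functional for the limit scales `κ∞ = 0` (Hellinger) and `κ∞ = ∞` (Wasserstein). -/
def JContGen {X : Type*} [MeasurableSpace X] [PseudoMetricSpace X] [OpensMeasurableSpace X]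
    {M : ℝ≥0} (Λ : Measure (cSet X M)) (κinf : ℝ≥0∞) (ν : Measure X) : ℝ≥0∞ :=
  if κinf = 0 then ∫⁻ μ : cSet X M, Hell2 ((μ : FiniteMeasure X) : Measure X) ν ∂Λ
  else if κinf = ⊤ then ∫⁻ μ : cSet X M, W2 ((μ : FiniteMeasure X) : Measure X) ν ∂Λ
  else ∫⁻ μ : cSet X M, HK2 κinf.toReal ((μ : FiniteMeasure X) : Measure X) ν ∂Λ

/-- The barycenter functional `J_{ρ,κ}` for Dirac input measures distributed as `ρ`. -/
def JDirac {X : Type*} [MeasurableSpace X] [PseudoMetricSpace X]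
    (ρ : Measure X) (κ : ℝ) (ν : Measure X) : ℝ≥0∞ :=
  ∫⁻ x, HK2 κ (Measure.dirac x) ν ∂ρ

/-- The dual constraint function `F_{ρ,κ}(ψ)`. -/
def Fcon {X : Type*} [MeasurableSpace X] [PseudoMetricSpace X]
    (ρ : Measure X) (κ : ℝ) (ψ : X → ℝ) (y : X) : ℝ :=
  ∫ x, tcos (dist x y / κ) ^ 2 / (1 - ψ x) ∂ρ

/-- Admissibility for the dual problem `(D_{ρ,κ})`. -/
def DualAdm {X : Type*} [MeasurableSpace X] [PseudoMetricSpace X]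
    (ρ : Measure X) (κ : ℝ) (ψ : X → ℝ) : Prop :=
  Continuous ψ ∧ (∀ x, ψ x < 1) ∧ ∀ y, Fcon ρ κ ψ y ≤ 1

/-- Optimality for the dual problem `(D_{ρ,κ})`. -/
def DualOpt {X : Type*} [MeasurableSpace X] [PseudoMetricSpace X]
    (ρ : Measure X) (κ : ℝ) (ψ : X → ℝ) : Prop :=
  DualAdm ρ κ ψ ∧ ∀ ψ' : X → ℝ, DualAdm ρ κ ψ' → ∫ x, ψ' x ∂ρ ≤ ∫ x, ψ x ∂ρ

/-- `ν` minimizes `J_{ρ,κ}` over the nonnegative finite measures. -/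
def PrimalMin {X : Type*} [MeasurableSpace X] [PseudoMetricSpace X]
    (ρ : Measure X) (κ : ℝ) (ν : Measure X) : Prop :=
  IsFiniteMeasure ν ∧ ∀ ν' : Measure X, IsFiniteMeasure ν' → JDirac ρ κ ν ≤ JDirac ρ κ ν'

/-- Support of a measure. -/
def msupport {X : Type*} [TopologicalSpace X] [MeasurableSpace X] (μ : Measure X) : Set X :=
  {x | ∀ U ∈ nhds x, 0 < μ U}

/-- A measure is discrete if it is a countable sum of weighted Dirac measures. -/
def IsDiscreteMeas {X : Type*} [MeasurableSpace X] (μ : Measure X) : Prop :=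
  ∃ (x : ℕ → X) (c : ℕ → ℝ≥0∞), μ = Measure.sum fun n => c n • Measure.dirac (x n)

/-- The dual constraint set `Q_κ`. -/
def QSet (X : Type*) [PseudoMetricSpace X] (κ : ℝ) : Set ((X → ℝ) × (X → ℝ)) :=
  {p | Continuous p.1 ∧ Continuous p.2 ∧ (∀ x, p.1 x ≤ 1) ∧ (∀ y, p.2 y ≤ 1) ∧
    ∀ x y, tcos (dist x y / κ) ^ 2 ≤ (1 - p.1 x) * (1 - p.2 y)}

lemma phiEnt_zero : phiEnt 0 = 1 := if_pos rfl
lemma phiEnt_top : phiEnt ⊤ = ⊤ := by simp [phiEnt]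
lemma phiEnt_ne_top {u : ℝ≥0∞} (hu : u ≠ ⊤) :
    phiEnt u = ENNReal.ofReal (u.toReal * Real.log u.toReal - u.toReal + 1) := by
  rcases eq_or_ne u 0 with h | h
  · simp [h, phiEnt]
  · simp [phiEnt, h, hu]
lemma phiReal_nonneg {x : ℝ} (hx : 0 ≤ x) : 0 ≤ x * Real.log x - x + 1 := by
  rcases hx.eq_or_lt with h | h
  · simp [← h]
  · have h1 : Real.log x⁻¹ ≤ x⁻¹ - 1 := Real.log_le_sub_one_of_pos (by positivity)
    rw [Real.log_inv] at h1
    have h3 : x * (1 - x⁻¹) ≤ x * Real.log x := by nlinarith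
    have h4 : x * (1 - x⁻¹) = x - 1 := by field_simp
    linarith
lemma phiReal_lb {x a : ℝ} (hx : 0 ≤ x) (ha : 0 < a) :
    x * Real.log a + 1 - a ≤ x * Real.log x - x + 1 := by
  rcases hx.eq_or_lt with h | h
  · simp [← h]; linarith
  · have h0 := phiReal_nonneg (x := x / a) (by positivity)
    have hlog : Real.log (x / a) = Real.log x - Real.log a := Real.log_div h.ne' ha.ne'
    have hmul : 0 ≤ a * (x / a * Real.log (x / a) - x / a + 1) := mul_nonneg ha.le h0
    have hexp : a * (x / a * Real.log (x / a) - x / a + 1)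
        = x * Real.log x - x * Real.log a - x + a := by
      rw [hlog]; field_simp
    nlinarith
lemma phiEnt_ge_lin1 {c K : ℝ} (hc : 0 ≤ c)
    (h : ∀ x : ℝ, 0 ≤ x → K ≤ x * Real.log x - x + 1 + c * x) (u : ℝ≥0∞) :
    ENNReal.ofReal K ≤ phiEnt u + ENNReal.ofReal c * u := by
  rcases eq_or_ne u ⊤ with rfl | hu
  · simp [phiEnt_top]
  · have hx : (0:ℝ) ≤ u.toReal := ENNReal.toReal_nonneg
    calc ENNReal.ofReal K
        ≤ ENNReal.ofReal ((u.toReal * Real.log u.toReal - u.toReal + 1) + c * u.toReal) :=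
          ENNReal.ofReal_le_ofReal (by linarith [h _ hx])
      _ ≤ ENNReal.ofReal (u.toReal * Real.log u.toReal - u.toReal + 1)
          + ENNReal.ofReal (c * u.toReal) := ENNReal.ofReal_add_le
      _ = phiEnt u + ENNReal.ofReal c * u := by
          rw [phiEnt_ne_top hu, ENNReal.ofReal_mul hc, ENNReal.ofReal_toReal hu]
lemma phiEnt_ge_lin2 {c d : ℝ} (hd : 0 ≤ d)
    (h : ∀ x : ℝ, 0 ≤ x → d * x ≤ x * Real.log x - x + 1 + c) (u : ℝ≥0∞) :
    ENNReal.ofReal d * u ≤ phiEnt u + ENNReal.ofReal c := by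
  rcases eq_or_ne u ⊤ with rfl | hu
  · simp [phiEnt_top]
  · have hx : (0:ℝ) ≤ u.toReal := ENNReal.toReal_nonneg
    calc ENNReal.ofReal d * u = ENNReal.ofReal (d * u.toReal) := by
          rw [ENNReal.ofReal_mul hd, ENNReal.ofReal_toReal hu]
      _ ≤ ENNReal.ofReal ((u.toReal * Real.log u.toReal - u.toReal + 1) + c) :=
          ENNReal.ofReal_le_ofReal (by linarith [h _ hx])
      _ ≤ ENNReal.ofReal (u.toReal * Real.log u.toReal - u.toReal + 1) + ENNReal.ofReal c :=
          ENNReal.ofReal_add_le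
      _ = phiEnt u + ENNReal.ofReal c := by rw [phiEnt_ne_top hu]

lemma measurable_phiEnt : Measurable phiEnt := by
  have h1 : Measurable fun s : ℝ≥0∞ =>
      ENNReal.ofReal (s.toReal * Real.log s.toReal - s.toReal + 1) :=
    (((ENNReal.measurable_toReal.mul
      (Real.measurable_log.comp ENNReal.measurable_toReal)).sub
      ENNReal.measurable_toReal).add measurable_const).ennreal_ofReal
  unfold phiEnt
  exact Measurable.ite measurableSet_eq measurable_const
    (Measurable.ite measurableSet_eq measurable_const h1)

lemma core_ineq {X : Type*} [MeasurableSpace X] (ν : Measure X) [IsFiniteMeasure ν]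
    {S : Set X} {f : X → ℝ≥0∞} (hf : Measurable f)
    {m : ℝ≥0∞} (hm : ∫⁻ y in S, f y ∂ν = m) :
    1 + ν S ≤ phiEnt m + (∫⁻ y in S, phiEnt (f y) ∂ν) + 2 * (ν S) ^ (1/2 : ℝ) := by
  rcases eq_or_ne m ⊤ with rfl | hmtop
  · rw [phiEnt_top, top_add, top_add]; exact le_top
  set I := ∫⁻ y in S, phiEnt (f y) ∂ν with hI
  set b := (ν S).toReal with hbdef
  have hb_ne : ν S ≠ ⊤ := measure_ne_top ν S
  have hνS : ν S = ENNReal.ofReal b := (ENNReal.ofReal_toReal hb_ne).symm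
  have hb0 : (0:ℝ) ≤ b := hbdef ▸ ENNReal.toReal_nonneg
  rcases hb0.eq_or_lt with h0 | h0
  · have hz : ν S = 0 := by rw [hνS, ← h0, ENNReal.ofReal_zero]
    have hm0 : m = 0 := by
      rw [← hm, Measure.restrict_eq_zero.mpr hz, lintegral_zero_measure]
    rw [hm0, phiEnt_zero, hz]
    simp
  set sb := Real.sqrt b with hsbdef
  have hsb : 0 < sb := Real.sqrt_pos.mpr h0
  have hsb2 : sb * sb = b := Real.mul_self_sqrt h0.le
  have h2sb : 2 * (ν S) ^ (1/2 : ℝ) = ENNReal.ofReal (2 * sb) := by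
    rw [hνS, ENNReal.ofReal_rpow_of_pos h0, ← Real.sqrt_eq_rpow,
      ENNReal.ofReal_mul (by norm_num : (0:ℝ) ≤ 2)]
    norm_num
    rw [hsbdef]
  have hone : (1 : ℝ≥0∞) = ENNReal.ofReal 1 := ENNReal.ofReal_one.symm
  rw [hone, h2sb, hνS]
  rcases le_or_gt sb 1 with hcase | hcase
  · -- small mass case
    set t := -Real.log sb with htdef
    have ht : 0 ≤ t := by
      have := Real.log_nonpos hsb.le hcase
      rw [htdef]; linarith
    set c := sb⁻¹ - 1 with hcdef
    have hc : 0 ≤ c := by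
      have : 1 ≤ sb⁻¹ := (one_le_inv₀ hsb).mpr hcase
      rw [hcdef]; linarith
    have hA : ENNReal.ofReal (1 - sb) ≤ phiEnt m + ENNReal.ofReal t * m := by
      apply phiEnt_ge_lin1 ht _ m
      intro x hx
      have h1 := phiReal_lb hx hsb
      have : Real.log sb = -t := by rw [htdef]; ring
      rw [this] at h1; linarith
    have hBpt : ∀ u : ℝ≥0∞, ENNReal.ofReal t * u ≤ phiEnt u + ENNReal.ofReal c := by
      apply phiEnt_ge_lin2 ht
      intro x hx
      have h1 := phiReal_lb hx (inv_pos.mpr hsb)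
      rw [Real.log_inv] at h1
      rw [hcdef]; rw [htdef]; linarith
    have hBint : ENNReal.ofReal t * m ≤ I + ENNReal.ofReal (sb - b) := by
      have hmono : ∫⁻ y in S, ENNReal.ofReal t * f y ∂ν
          ≤ ∫⁻ y in S, (phiEnt (f y) + ENNReal.ofReal c) ∂ν :=
        lintegral_mono fun y => hBpt (f y)
      rw [lintegral_const_mul _ hf, hm] at hmono
      rw [lintegral_add_right _ measurable_const, setLIntegral_const] at hmono
      have hcb : ENNReal.ofReal c * ν S = ENNReal.ofReal (sb - b) := by
        rw [hνS, ← ENNReal.ofReal_mul hc]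
        congr 1
        rw [hcdef, ← hsb2]; field_simp
      rwa [hcb] at hmono
    have hsbb : 0 ≤ sb - b := by nlinarith
    have key : ENNReal.ofReal 1 + ENNReal.ofReal b + ENNReal.ofReal (sb - b)
        ≤ (phiEnt m + I + ENNReal.ofReal (2 * sb)) + ENNReal.ofReal (sb - b) := by
      calc ENNReal.ofReal 1 + ENNReal.ofReal b + ENNReal.ofReal (sb - b)
          = ENNReal.ofReal (1 - sb) + ENNReal.ofReal (2 * sb) := by
            rw [← ENNReal.ofReal_add (by norm_num) ENNReal.toReal_nonneg,
              ← ENNReal.ofReal_add (by positivity) hsbb,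
              ← ENNReal.ofReal_add (by linarith) (by positivity)]
            congr 1; ring
        _ ≤ (phiEnt m + ENNReal.ofReal t * m) + ENNReal.ofReal (2 * sb) :=
            add_le_add_left hA _
        _ ≤ (phiEnt m + (I + ENNReal.ofReal (sb - b))) + ENNReal.ofReal (2 * sb) :=
            add_le_add_left (add_le_add_right hBint _) _
        _ = (phiEnt m + I + ENNReal.ofReal (2 * sb)) + ENNReal.ofReal (sb - b) := by ring
    exact (ENNReal.add_le_add_iff_right ENNReal.ofReal_ne_top).mp key
  · -- large mass case
    set t := Real.log sb with htdef
    have ht : 0 ≤ t := Real.log_nonneg hcase.le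
    have hb1 : 1 < b := by nlinarith
    have hA : ENNReal.ofReal t * m ≤ phiEnt m + ENNReal.ofReal (sb - 1) := by
      apply phiEnt_ge_lin2 ht _ m
      intro x hx
      have h1 := phiReal_lb hx hsb
      rw [← htdef] at h1; linarith
    have hK : 0 ≤ 1 - sb⁻¹ := by
      have : sb⁻¹ ≤ 1 := by
        rw [inv_le_one_iff₀]; right; exact hcase.le
      linarith
    have hBpt : ∀ u : ℝ≥0∞, ENNReal.ofReal (1 - sb⁻¹) ≤ phiEnt u + ENNReal.ofReal t * u := by
      apply phiEnt_ge_lin1 ht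
      intro x hx
      have h1 := phiReal_lb hx (inv_pos.mpr hsb)
      rw [Real.log_inv, ← htdef] at h1
      linarith
    have hBint : ENNReal.ofReal (b - sb) ≤ I + ENNReal.ofReal t * m := by
      have hmono : ∫⁻ y in S, (ENNReal.ofReal (1 - sb⁻¹)) ∂ν
          ≤ ∫⁻ y in S, (phiEnt (f y) + ENNReal.ofReal t * f y) ∂ν :=
        lintegral_mono fun y => hBpt (f y)
      rw [setLIntegral_const] at hmono
      rw [lintegral_add_right _ (hf.const_mul _), lintegral_const_mul _ hf, hm] at hmono
      have hcb : ENNReal.ofReal (1 - sb⁻¹) * ν S = ENNReal.ofReal (b - sb) := by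
        rw [hνS, ← ENNReal.ofReal_mul hK]
        congr 1
        rw [← hsb2]; field_simp
      rwa [hcb] at hmono
    have hbsb : 0 ≤ b - sb := by nlinarith
    have hfin : ENNReal.ofReal (sb - 1) + ENNReal.ofReal t * m ≠ ⊤ :=
      ENNReal.add_ne_top.mpr ⟨ENNReal.ofReal_ne_top,
        ENNReal.mul_ne_top ENNReal.ofReal_ne_top hmtop⟩
    have key : (ENNReal.ofReal 1 + ENNReal.ofReal b)
          + (ENNReal.ofReal (sb - 1) + ENNReal.ofReal t * m)
        ≤ (phiEnt m + I + ENNReal.ofReal (2 * sb))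
          + (ENNReal.ofReal (sb - 1) + ENNReal.ofReal t * m) := by
      calc (ENNReal.ofReal 1 + ENNReal.ofReal b)
            + (ENNReal.ofReal (sb - 1) + ENNReal.ofReal t * m)
          = (ENNReal.ofReal (b - sb) + ENNReal.ofReal (2 * sb)) + ENNReal.ofReal t * m := by
            rw [← ENNReal.ofReal_add (by norm_num : (0:ℝ) ≤ 1) hb0,
              ← add_assoc, ← ENNReal.ofReal_add (by linarith : (0:ℝ) ≤ 1 + b) (by linarith : (0:ℝ) ≤ sb - 1),
              ← ENNReal.ofReal_add hbsb (by positivity : (0:ℝ) ≤ 2 * sb)]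
            congr 1
            exact congrArg _ (by ring)
        _ ≤ ((I + ENNReal.ofReal t * m) + ENNReal.ofReal (2 * sb)) + ENNReal.ofReal t * m := by
            exact add_le_add_left (add_le_add_left hBint _) _
        _ ≤ ((I + ENNReal.ofReal t * m) + ENNReal.ofReal (2 * sb))
              + (phiEnt m + ENNReal.ofReal (sb - 1)) := add_le_add_right hA _
        _ = (phiEnt m + I + ENNReal.ofReal (2 * sb))
              + (ENNReal.ofReal (sb - 1) + ENNReal.ofReal t * m) := by ring
    exact (ENNReal.add_le_add_iff_right hfin).mp key

lemma hk_coupling_bound {X : Type*} [MeasurableSpace X] [MetricSpace X]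
    [OpensMeasurableSpace X] [SecondCountableTopology X] [MeasurableSingletonClass X]
    (κ : ℝ) (x : X) (ν : Measure X) [IsFiniteMeasure ν]
    (γ : Measure (X × X)) [IsFiniteMeasure γ] :
    1 + ν Set.univ ≤ ((∫⁻ p, hkCost κ p.1 p.2 ∂γ) + KLdiv (γ.map Prod.fst) (Measure.dirac x)
      + KLdiv (γ.map Prod.snd) ν) + 2 * (ν (Metric.ball x (κ * π / 2))) ^ (1/2 : ℝ) := by
  set r := κ * π / 2 with hrdef
  set S := Metric.ball x r with hSdef
  by_cases hc : (∫⁻ p, hkCost κ p.1 p.2 ∂γ) = ⊤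
  · rw [hc]; simp [top_add]
  by_cases h1 : KLdiv (γ.map Prod.fst) (Measure.dirac x) = ⊤
  · rw [h1]; simp [top_add]
  by_cases h2 : KLdiv (γ.map Prod.snd) ν = ⊤
  · rw [h2]; simp [top_add]
  have hac1 : γ.map Prod.fst ≪ Measure.dirac x := by
    by_contra hn; exact h1 (by rw [KLdiv, if_neg hn])
  have hac2 : γ.map Prod.snd ≪ ν := by
    by_contra hn; exact h2 (by rw [KLdiv, if_neg hn])
  haveI : IsFiniteMeasure (γ.map Prod.fst) :=
    ⟨by rw [Measure.map_apply measurable_fst MeasurableSet.univ]; exact measure_lt_top γ _⟩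
  haveI : IsFiniteMeasure (γ.map Prod.snd) :=
    ⟨by rw [Measure.map_apply measurable_snd MeasurableSet.univ]; exact measure_lt_top γ _⟩
  set m := γ Set.univ with hmdef
  have hg := Measure.measurable_rnDeriv (γ.map Prod.fst) (Measure.dirac x)
  have hKL1 : KLdiv (γ.map Prod.fst) (Measure.dirac x)
      = phiEnt ((γ.map Prod.fst).rnDeriv (Measure.dirac x) x) := by
    rw [KLdiv, if_pos hac1]
    exact lintegral_dirac' x
      (show Measurable fun y => phiEnt ((γ.map Prod.fst).rnDeriv (Measure.dirac x) y) from
        measurable_phiEnt.comp hg)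
  have hgx : (γ.map Prod.fst).rnDeriv (Measure.dirac x) x = m := by
    have hwd := Measure.withDensity_rnDeriv_eq _ _ hac1
    have h3 : ∫⁻ y, (γ.map Prod.fst).rnDeriv (Measure.dirac x) y ∂(Measure.dirac x)
        = γ.map Prod.fst Set.univ := by
      conv_rhs => rw [← hwd]
      rw [withDensity_apply _ MeasurableSet.univ, Measure.restrict_univ]
    rw [lintegral_dirac' _ hg] at h3
    rw [h3, Measure.map_apply measurable_fst MeasurableSet.univ, Set.preimage_univ]
  have hγx : γ (Prod.fst ⁻¹' {x}ᶜ) = 0 := by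
    have hd : Measure.dirac x ({x}ᶜ : Set X) = 0 := by
      simp [Measure.dirac_apply' _ (measurableSet_singleton x).compl]
    have h := hac1 hd
    rwa [Measure.map_apply measurable_fst (measurableSet_singleton x).compl] at h
  have hmsdist : MeasurableSet {p : X × X | dist p.1 p.2 < r} :=
    (isOpen_lt (continuous_fst.dist continuous_snd) continuous_const).measurableSet
  have hbad : γ {p : X × X | ¬ dist p.1 p.2 < r} = 0 := by
    by_contra hb
    apply hc
    have heq : ∫⁻ p in {p : X × X | ¬ dist p.1 p.2 < r}, hkCost κ p.1 p.2 ∂γ = ⊤ := by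
      have hcong : ∫⁻ p in {p : X × X | ¬ dist p.1 p.2 < r}, hkCost κ p.1 p.2 ∂γ
          = ∫⁻ _ in {p : X × X | ¬ dist p.1 p.2 < r}, ⊤ ∂γ := by
        refine setLIntegral_congr_fun ?_ (fun p hp => ?_)
        · exact hmsdist.compl
        · exact if_neg hp
      rw [hcong, setLIntegral_const, ENNReal.top_mul hb]
    exact top_le_iff.mp (heq ▸ setLIntegral_le_lintegral _ _)
  set σ := γ.map Prod.snd with hσdef
  have hσc : σ Sᶜ = 0 := by
    rw [hσdef, Measure.map_apply measurable_snd measurableSet_ball.compl]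
    refine measure_mono_null ?_
      (measure_union_null hγx hbad)
    intro p hp
    by_cases hpx : p.1 = x
    · right
      simp only [Set.mem_setOf_eq]
      intro hlt
      exact hp (Metric.mem_ball.mpr (by rw [dist_comm, ← hpx]; exact hlt))
    · left; exact hpx
  have hσuniv : σ Set.univ = m := by
    rw [hσdef, Measure.map_apply measurable_snd MeasurableSet.univ, Set.preimage_univ]
  set f := σ.rnDeriv ν with hfdef
  have hfm : Measurable f := Measure.measurable_rnDeriv σ ν
  have hwd := Measure.withDensity_rnDeriv_eq σ ν hac2
  have hσS : ∫⁻ y in S, f y ∂ν = m := by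
    have hA : ∫⁻ y in S, f y ∂ν = σ S := by
      conv_rhs => rw [← hwd]
      rw [withDensity_apply _ measurableSet_ball]
    have hB : σ S + σ Sᶜ = σ Set.univ := measure_add_measure_compl measurableSet_ball
    rw [hσc, add_zero, hσuniv] at hB
    rw [hA, hB]
  have hKL2 : KLdiv σ ν = (∫⁻ y in S, phiEnt (f y) ∂ν) + ν Sᶜ := by
    rw [KLdiv, if_pos hac2, ← lintegral_add_compl (fun y => phiEnt (f y)) measurableSet_ball]
    congr 1
    have hz : ∫⁻ y in Sᶜ, f y ∂ν = 0 := by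
      have : ∫⁻ y in Sᶜ, f y ∂ν = σ Sᶜ := by
        conv_rhs => rw [← hwd]
        rw [withDensity_apply _ measurableSet_ball.compl]
      rw [this, hσc]
    have hae : f =ᵐ[ν.restrict Sᶜ] 0 := (lintegral_eq_zero_iff hfm).mp hz
    calc ∫⁻ y in Sᶜ, phiEnt (f y) ∂ν = ∫⁻ _ in Sᶜ, 1 ∂ν := by
          refine lintegral_congr_ae (hae.mono fun y hy => ?_)
          have hy0 : f y = 0 := hy
          simp [hy0, phiEnt_zero]
      _ = ν Sᶜ := setLIntegral_one _
  rw [hKL1, hgx, hKL2]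
  have husplit : ν Set.univ = ν S + ν Sᶜ := (measure_add_measure_compl measurableSet_ball).symm
  rw [husplit]
  have hcore := core_ineq ν hfm hσS
  calc 1 + (ν S + ν Sᶜ) = (1 + ν S) + ν Sᶜ := by ring
    _ ≤ (phiEnt m + (∫⁻ y in S, phiEnt (f y) ∂ν) + 2 * ν S ^ (1/2 : ℝ)) + ν Sᶜ :=
        by gcongr
    _ ≤ ((∫⁻ p, hkCost κ p.1 p.2 ∂γ) + phiEnt m
          + ((∫⁻ y in S, phiEnt (f y) ∂ν) + ν Sᶜ)) + 2 * ν S ^ (1/2 : ℝ) := by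
        have : (phiEnt m + (∫⁻ y in S, phiEnt (f y) ∂ν) + 2 * ν S ^ (1/2 : ℝ)) + ν Sᶜ
            = (phiEnt m + ((∫⁻ y in S, phiEnt (f y) ∂ν) + ν Sᶜ)) + 2 * ν S ^ (1/2 : ℝ) := by
          ring
        rw [this]
        gcongr
        exact le_add_self

set_option maxHeartbeats 1000000 in
/-- Mass bound for minimizers of `J_{ρ,κ}` in terms of the concentration of `ρ`. -/
theorem hk_dirac_mass_bound {d : ℕ} (Ω : Set (Ed d)) (hΩ₁ : IsCompact Ω)
    (hΩ₂ : Convex ℝ Ω) (hΩ₃ : (interior Ω).Nonempty)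
    (ρ : Measure ↥Ω) [IsProbabilityMeasure ρ] (κ : ℝ) (hκ : 0 < κ)
    (ν : Measure ↥Ω) (hν : PrimalMin ρ κ ν) :
    ν Set.univ ≤ 4 * ⨆ y : ↥Ω, ρ (Metric.ball y (κ * π / 2)) := by
  obtain ⟨hνfin, hmin⟩ := hν
  haveI := hνfin
  set r := κ * π / 2 with hrdef
  set C := ⨆ y : ↥Ω, ρ (Metric.ball y r) with hCdef
  set N := ν Set.univ with hNdef
  have hN_ne : N ≠ ⊤ := measure_ne_top ν _
  -- value of the functional at the zero measure
  have hJ0 : JDirac ρ κ (0 : Measure ↥Ω) ≤ 1 := by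
    have hpt : ∀ x : ↥Ω, HK2 κ (Measure.dirac x) (0 : Measure ↥Ω) ≤ 1 := by
      intro x
      have hval : ((∫⁻ p, hkCost κ p.1 p.2 ∂(0 : Measure (↥Ω × ↥Ω)))
          + KLdiv ((0 : Measure (↥Ω × ↥Ω)).map Prod.fst) (Measure.dirac x)
          + KLdiv ((0 : Measure (↥Ω × ↥Ω)).map Prod.snd) (0 : Measure ↥Ω)) ≤ 1 := by
        rw [lintegral_zero_measure, Measure.map_zero, Measure.map_zero]
        have hkl1 : KLdiv (0 : Measure ↥Ω) (Measure.dirac x) = 1 := by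
          rw [KLdiv, if_pos (Measure.AbsolutelyContinuous.zero _)]
          have h0 := Measure.rnDeriv_zero (Measure.dirac x)
          calc ∫⁻ y, phiEnt ((0 : Measure ↥Ω).rnDeriv (Measure.dirac x) y) ∂(Measure.dirac x)
              = ∫⁻ _, 1 ∂(Measure.dirac x) := by
                refine lintegral_congr_ae (h0.mono fun y hy => ?_)
                have hy0 : (0 : Measure ↥Ω).rnDeriv (Measure.dirac x) y = 0 := hy
                simp [hy0, phiEnt_zero]
            _ = 1 := by simp
        have hkl2 : KLdiv (0 : Measure ↥Ω) (0 : Measure ↥Ω) = 0 := by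
          rw [KLdiv, if_pos (Measure.AbsolutelyContinuous.zero _), lintegral_zero_measure]
        rw [hkl1, hkl2, zero_add, add_zero]
      exact le_trans (iInf_le_of_le 0 (iInf_le_of_le (by infer_instance) le_rfl)) hval
    calc JDirac ρ κ (0 : Measure ↥Ω) ≤ ∫⁻ _, 1 ∂ρ := lintegral_mono hpt
      _ = 1 := by simp
  have hJν : JDirac ρ κ ν ≤ 1 := le_trans (hmin 0 (by infer_instance)) hJ0
  -- the ball-mass function
  set s2 : Set (↥Ω × ↥Ω) := {p | dist p.1 p.2 < r} with hs2
  have hs2m : MeasurableSet s2 :=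
    (isOpen_lt (continuous_fst.dist continuous_snd) continuous_const).measurableSet
  set F : ↥Ω → ℝ≥0∞ := fun x => ν (Prod.mk x ⁻¹' s2) with hF
  have hFm : Measurable F := measurable_measure_prodMk_left hs2m
  have hFball : ∀ x : ↥Ω, F x = ν (Metric.ball x r) := by
    intro x
    have hpre : Prod.mk x ⁻¹' s2 = Metric.ball x r := by
      ext y
      simp [hs2, Metric.mem_ball, dist_comm]
    show ν (Prod.mk x ⁻¹' s2) = ν (Metric.ball x r)
    rw [hpre]
  -- pointwise lower bound on HK2
  have hkey : ∀ x : ↥Ω, 1 + N ≤ HK2 κ (Measure.dirac x) ν + 2 * (F x) ^ (1/2 : ℝ) := by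
    intro x
    rw [hFball x, ← tsub_le_iff_right]
    refine le_iInf fun γ => le_iInf fun hγ => ?_
    haveI := hγ
    rw [tsub_le_iff_right]
    exact hk_coupling_bound κ x ν γ
  -- integrate the pointwise bound
  have hmeas_half : Measurable fun x => (F x) ^ (1/2 : ℝ) := hFm.pow_const _
  have hint : 1 + N ≤ 1 + 2 * (∫⁻ x, F x ∂ρ) ^ (1/2 : ℝ) := by
    have h1 : (1 + N : ℝ≥0∞) = ∫⁻ _, (1 + N) ∂ρ := by simp
    have h2 : ∫⁻ x, (HK2 κ (Measure.dirac x) ν + 2 * (F x) ^ (1/2 : ℝ)) ∂ρ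
        = JDirac ρ κ ν + ∫⁻ x, 2 * (F x) ^ (1/2 : ℝ) ∂ρ :=
      lintegral_add_right _ (hmeas_half.const_mul 2)
    have h3 : ∫⁻ x, 2 * (F x) ^ (1/2 : ℝ) ∂ρ = 2 * ∫⁻ x, (F x) ^ (1/2 : ℝ) ∂ρ :=
      lintegral_const_mul _ hmeas_half
    have hCS : ∫⁻ x, (F x) ^ (1/2 : ℝ) ∂ρ ≤ (∫⁻ x, F x ∂ρ) ^ (1/2 : ℝ) := by
      have hconj : Real.HolderConjugate 2 2 := Real.HolderConjugate.two_two
      have h := ENNReal.lintegral_mul_le_Lp_mul_Lq ρ hconj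
        (f := fun x => (F x) ^ (1/2 : ℝ)) (g := fun _ => 1)
        hmeas_half.aemeasurable aemeasurable_const
      have hxx : ∀ x : ↥Ω, ((F x) ^ (1/2 : ℝ)) ^ (2:ℝ) = F x := fun x => by
        rw [← ENNReal.rpow_mul]; norm_num
      simp only [Pi.mul_apply, mul_one, ENNReal.one_rpow, hxx, lintegral_one,
        measure_univ] at h
      simpa using h
    calc (1 + N : ℝ≥0∞) = ∫⁻ _, (1 + N) ∂ρ := h1
      _ ≤ ∫⁻ x, (HK2 κ (Measure.dirac x) ν + 2 * (F x) ^ (1/2 : ℝ)) ∂ρ :=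
          lintegral_mono hkey
      _ = JDirac ρ κ ν + 2 * ∫⁻ x, (F x) ^ (1/2 : ℝ) ∂ρ := by rw [h2, h3]
      _ ≤ 1 + 2 * (∫⁻ x, F x ∂ρ) ^ (1/2 : ℝ) := by gcongr
  -- Fubini bound on the integral of F
  have hFub : ∫⁻ x, F x ∂ρ ≤ C * N := by
    have h1 : ∫⁻ x, F x ∂ρ = (ρ.prod ν) s2 := (Measure.prod_apply hs2m).symm
    have h2 : (ρ.prod ν) s2 = ∫⁻ y, ρ ((fun x => (x, y)) ⁻¹' s2) ∂ν :=
      Measure.prod_apply_symm hs2m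
    have h3 : ∀ y : ↥Ω, ρ ((fun x => (x, y)) ⁻¹' s2) ≤ C := by
      intro y
      have hpre : ((fun x : ↥Ω => (x, y)) ⁻¹' s2) = Metric.ball y r := by
        ext z
        simp [hs2, Metric.mem_ball]
      rw [hpre, hCdef]
      exact le_iSup (fun y : ↥Ω => ρ (Metric.ball y r)) y
    calc ∫⁻ x, F x ∂ρ = ∫⁻ y, ρ ((fun x => (x, y)) ⁻¹' s2) ∂ν := by rw [h1, h2]
      _ ≤ ∫⁻ _, C ∂ν := lintegral_mono h3
      _ = C * N := by rw [lintegral_const]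
  have hC_le : C ≤ 1 := by
    rw [hCdef]
    exact iSup_le fun y => (measure_mono (Set.subset_univ _)).trans_eq measure_univ
  have hC_ne : C ≠ ⊤ := (hC_le.trans_lt one_lt_top).ne
  -- conclude
  have hN2 : N ≤ 2 * (C * N) ^ (1/2 : ℝ) := by
    have := (ENNReal.add_le_add_iff_left (one_ne_top)).mp hint
    calc N ≤ 2 * (∫⁻ x, F x ∂ρ) ^ (1/2 : ℝ) := this
      _ ≤ 2 * (C * N) ^ (1/2 : ℝ) := by gcongr
  by_cases hCN : C * N = 0
  · rw [hCN, ENNReal.zero_rpow_of_pos (by norm_num), mul_zero] at hN2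
    exact hN2.trans zero_le
  · have hCNtop : C * N ≠ ⊤ := ENNReal.mul_ne_top hC_ne hN_ne
    have hhalf : (C * N) ^ (1/2 : ℝ) * (C * N) ^ (1/2 : ℝ) = C * N := by
      rw [← ENNReal.rpow_add _ _ hCN hCNtop]
      norm_num
    have hsq : N * N ≤ (4 * C) * N := by
      calc N * N ≤ (2 * (C * N) ^ (1/2 : ℝ)) * (2 * (C * N) ^ (1/2 : ℝ)) :=
            mul_le_mul' hN2 hN2
        _ = 4 * ((C * N) ^ (1/2 : ℝ) * (C * N) ^ (1/2 : ℝ)) := by ring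
        _ = 4 * (C * N) := by rw [hhalf]
        _ = (4 * C) * N := by ring
    by_cases hN0 : N = 0
    · exact hN0.le.trans zero_le
    · exact (ENNReal.mul_le_mul_iff_left hN0 hN_ne).mp hsq

end
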